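/- (Lemma II) For any standard sentence s in the language of T: if T proves ¬s and T proves ∃n Proof_T(n, ⁰⌜s⌝), then T proves remote(⁰⌜s⌝). In other words, if T refutes a standard sentence yet proves the existence of an internal proof of that sentence, then T proves that sentence is remote. -/

import Mathlib

open FirstOrder FirstOrder.Language

namespace GodelStalk

/-- Function symbols of the first-order language of arithmetic:
zero, successor, addition, multiplication. -/
inductive ArithFunc : ℕ → Type
  | zero : ArithFunc 0
  | succ : ArithFunc 1
  | add : ArithFunc 2
  | mul : ArithFunc 2

/-- Relation symbols of the first-order language of arithmetic: `≤`. -/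
inductive ArithRel : ℕ → Type
  | le : ArithRel 2

/-- The first-order language of arithmetic. -/
def Larith : FirstOrder.Language := ⟨ArithFunc, ArithRel⟩

/-- The numeral `⁰n`: `n`-many repeated applications of the successor symbol to zero. -/
def num {α : Type} : ℕ → Larith.Term α
  | 0 => Term.func ArithFunc.zero ![]
  | n + 1 => Term.func ArithFunc.succ ![num n]

/-- Successor term. -/
def succT {α : Type} (t : Larith.Term α) : Larith.Term α :=
  Term.func ArithFunc.succ ![t]

/-- Addition term. -/
def addT {α : Type} (t u : Larith.Term α) : Larith.Term α :=
  Term.func ArithFunc.add ![t, u]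

/-- Multiplication term. -/
def mulT {α : Type} (t u : Larith.Term α) : Larith.Term α :=
  Term.func ArithFunc.mul ![t, u]

/-- The formula `t ≤ u`. -/
def leF {α : Type} (t u : Larith.Term α) : Larith.Formula α :=
  Relations.formula₂ ArithRel.le t u

/-- The formula `t < u`, rendered as `S t ≤ u`. -/
def ltF {α : Type} (t u : Larith.Term α) : Larith.Formula α :=
  leF (succT t) u

/-- Universal quantification over one extra variable. -/
noncomputable def all1 {α : Type} (φ : Larith.Formula (α ⊕ Fin 1)) : Larith.Formula α :=
  Formula.iAlls (Fin 1) φ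

/-- Existential quantification over one extra variable. -/
noncomputable def ex1 {α : Type} (φ : Larith.Formula (α ⊕ Fin 1)) : Larith.Formula α :=
  Formula.iExs (Fin 1) φ

/-- Substitute a term for the unique free variable of a formula. -/
def app1 {α : Type} (φ : Larith.Formula (Fin 1)) (t : Larith.Term α) : Larith.Formula α :=
  φ.subst fun _ => t

/-- Substitute two terms for the two free variables of a formula. -/
def app2 {α : Type} (φ : Larith.Formula (Fin 2)) (t u : Larith.Term α) : Larith.Formula α :=
  φ.subst ![t, u]

/-- Substitute a term for the distinguished (`Sum.inr`) free variable of a formula. -/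
def substLast {α : Type} (φ : Larith.Formula (α ⊕ Fin 1)) (t : Larith.Term α) :
    Larith.Formula α :=
  φ.subst (Sum.elim Term.var fun _ => t)

/-- `isMinOf φ t` expresses `t = min z : φ(z)`, i.e. `φ(t) ∧ ∀ w < t, ¬φ(w)`. -/
noncomputable def isMinOf {α : Type} (φ : Larith.Formula (α ⊕ Fin 1)) (t : Larith.Term α) :
    Larith.Formula α :=
  substLast φ t ⊓ all1 (ltF (Term.var (Sum.inr 0)) (t.relabel Sum.inl) ⟹ ∼φ)

/-- `minProofOf pf c t` expresses `t = min z : pf(z, c)`. -/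
noncomputable def minProofOf {α : Type} (pf : Larith.Formula (Fin 2)) (c t : Larith.Term α) :
    Larith.Formula α :=
  isMinOf (app2 pf (Term.var (Sum.inr 0)) (c.relabel Sum.inl)) t

/-- Provability within the theory `T` (semantic consequence, which by the Gödel
completeness theorem coincides with first-order provability). -/
def Proves (T : Larith.Theory) (φ : Larith.Sentence) : Prop :=
  T ⊨ᵇ φ

/-- `T` is consistent. -/
def Consistent (T : Larith.Theory) : Prop :=
  ¬ Proves T ⊥

/-- `T` is complete: it decides every sentence. -/
def Complete (T : Larith.Theory) : Prop :=
  ∀ φ : Larith.Sentence, Proves T φ ∨ Proves T (∼φ)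

/-- Universal closure over `Fin k`-many free variables. -/
noncomputable def closure {k : ℕ} (φ : Larith.Formula (Fin k)) : Larith.Sentence :=
  Formula.iAlls (Fin k) (φ.relabel Sum.inr)

/-- The axioms of Robinson arithmetic `Q` (with `≤` defined from addition). -/
noncomputable def QTheory : Larith.Theory :=
  { closure (∼(Term.equal (succT (Term.var (0 : Fin 1))) (num 0))),
    closure (Term.equal (succT (Term.var (0 : Fin 2))) (succT (Term.var 1)) ⟹
      Term.equal (Term.var 0) (Term.var (1 : Fin 2))),
    closure (∼(Term.equal (Term.var (0 : Fin 1)) (num 0)) ⟹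
      ex1 (Term.equal (Term.var (Sum.inl 0)) (succT (Term.var (Sum.inr (0 : Fin 1)))) :
        Larith.Formula (Fin 1 ⊕ Fin 1))),
    closure (Term.equal (addT (Term.var (0 : Fin 1)) (num 0)) (Term.var 0)),
    closure (Term.equal (addT (Term.var (0 : Fin 2)) (succT (Term.var 1)))
      (succT (addT (Term.var 0) (Term.var (1 : Fin 2))))),
    closure (Term.equal (mulT (Term.var (0 : Fin 1)) (num 0)) (num 0)),
    closure (Term.equal (mulT (Term.var (0 : Fin 2)) (succT (Term.var 1)))
      (addT (mulT (Term.var 0) (Term.var 1)) (Term.var (0 : Fin 2)))),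
    closure ((leF (Term.var (0 : Fin 2)) (Term.var 1)) ⇔
      ex1 (Term.equal (addT (Term.var (Sum.inr (0 : Fin 1))) (Term.var (Sum.inl 0)))
        (Term.var (Sum.inl (1 : Fin 2))))) }

/-- The induction axiom for a formula `φ` with parameters `Fin k` and induction
variable the distinguished `Sum.inr` variable. -/
noncomputable def inductionSentence {k : ℕ} (φ : Larith.Formula (Fin k ⊕ Fin 1)) :
    Larith.Sentence :=
  closure ((substLast φ (num 0) ⊓
      all1 (φ ⟹ φ.subst (Sum.elim (Term.var ∘ Sum.inl)
        fun _ => succT (Term.var (Sum.inr 0))))) ⟹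
    all1 φ)

/-- Peano Arithmetic: Robinson arithmetic together with the induction scheme. -/
noncomputable def PATheory : Larith.Theory :=
  QTheory ∪ { σ | ∃ (k : ℕ) (φ : Larith.Formula (Fin k ⊕ Fin 1)), σ = inductionSentence φ }


/-! ### The extension `E_s(v)`, `remote`, and `𝔎` (minimality version) -/

/-- `extFormulaAt pf c t` is the extension formula `E_s` of the sentence `s` with
Gödel code `c`, evaluated at the term `t`:
`∀x ∀y (Proof_T(x, t) ∧ [y = min z : Proof_T(z, ⁰c)] → x ≥ y)`. -/
noncomputable def extFormulaAt {α : Type} (pf : Larith.Formula (Fin 2)) (c : ℕ)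
    (t : Larith.Term α) : Larith.Formula α :=
  Formula.iAlls (Fin 2)
    ((app2 pf (Term.var (Sum.inr 0)) (t.relabel Sum.inl) ⊓
        minProofOf pf (num c) (Term.var (Sum.inr 1))) ⟹
      leF (Term.var (Sum.inr 1)) (Term.var (Sum.inr 0)))

/-- The extension `E_s(v)` of the sentence `s` with Gödel code `c`, as a formula
in the single free variable `v`. -/
noncomputable def extFormula (pf : Larith.Formula (Fin 2)) (c : ℕ) :
    Larith.Formula (Fin 1) :=
  extFormulaAt pf c (Term.var 0)

/-- `remoteAt pf dgn t` is the formula `remote(t)`: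
`∃x ∃k ∃z (Dgn(x, t) ∧ k = min n : Proof_T(n, t) ∧ z = min m : Proof_T(m, x) ∧ z < k)`. -/
noncomputable def remoteAt {α : Type} (pf dgn : Larith.Formula (Fin 2))
    (t : Larith.Term α) : Larith.Formula α :=
  Formula.iExs (Fin 3)
    (app2 dgn (Term.var (Sum.inr 0)) (t.relabel Sum.inl) ⊓
      minProofOf pf (t.relabel Sum.inl) (Term.var (Sum.inr 1)) ⊓
      minProofOf pf (Term.var (Sum.inr 0)) (Term.var (Sum.inr 2)) ⊓
      ltF (Term.var (Sum.inr 2)) (Term.var (Sum.inr 1)))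

/-- `∃y (remote(y) ∧ Proof_T(t, y))` : `t` is (the code of) a proof of a remote sentence. -/
noncomputable def provesRemoteAt {α : Type} (pf dgn : Larith.Formula (Fin 2))
    (t : Larith.Term α) : Larith.Formula α :=
  ex1 (remoteAt pf dgn (Term.var (Sum.inr 0)) ⊓
    app2 pf (t.relabel Sum.inl) (Term.var (Sum.inr 0)))

/-- `isKAt pf dgn t` is the defining condition `t = 𝔎`, that is,
`t = min k : ∃y (remote(y) ∧ Proof_T(k, y))`. -/
noncomputable def isKAt {α : Type} (pf dgn : Larith.Formula (Fin 2))
    (t : Larith.Term α) : Larith.Formula α :=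
  isMinOf (provesRemoteAt pf dgn (Term.var (Sum.inr 0))) t

/-- `geqKAt pf dgn t` expresses `t ≥ 𝔎`: `∀w (w = 𝔎 → w ≤ t)`. -/
noncomputable def geqKAt {α : Type} (pf dgn : Larith.Formula (Fin 2))
    (t : Larith.Term α) : Larith.Formula α :=
  all1 (isKAt pf dgn (Term.var (Sum.inr 0)) ⟹
    leF (Term.var (Sum.inr 0)) (t.relabel Sum.inl))

/-- A bundle of the standard arithmetization data for the recursively axiomatized
theory `T`: Gödel's arithmetized proof predicate `ProofF` (i.e. `Proof_T`), a Gödel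
coding `code` of sentences, Rosser's arithmetized negation function `negfn`, and the
syntactic diagonalization operator `diag` (satisfying the diagonal lemma). -/
structure GodelSetting (T : Larith.Theory) : Type where
  /-- Gödel's arithmetized provability predicate `Proof_T(x, y)`. -/
  ProofF : Larith.Formula (Fin 2)
  /-- The arithmetical formula `Dgn(x, y)`. -/
  DgnF : Larith.Formula (Fin 2)
  /-- Gödel coding of sentences. -/
  code : Larith.Sentence → ℕ
  /-- Rosser's arithmetized negation function. -/
  negfn : ℕ → ℕ
  /-- The syntactic diagonalization `φ(v) ↦ D(φ(v))`. -/
  diag : Larith.Formula (Fin 1) → Larith.Sentence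
  /-- The diagonal lemma: `T ⊢ D(φ) ↔ φ(⁰⌜D(φ)⌝)`. -/
  diag_spec : ∀ φ : Larith.Formula (Fin 1),
    Proves T (diag φ ⇔ app1 φ (num (code (diag φ))))
  /-- If `T ⊢ s` then some standard natural number codes a proof of `s`. -/
  proof_complete : ∀ s : Larith.Sentence, Proves T s →
    ∃ n : ℕ, Proves T (app2 ProofF (num n) (num (code s)))
  /-- Conversely, a standardly coded internal proof of `s` yields `T ⊢ s`. -/
  proof_sound : ∀ (s : Larith.Sentence) (n : ℕ),
    Proves T (app2 ProofF (num n) (num (code s))) → Proves T s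
  /-- `Proof_T` is a decidable (Δ₁) predicate on standard naturals. -/
  proof_decide : ∀ n m : ℕ,
    Proves T (app2 ProofF (num n) (num m)) ∨ Proves T (∼(app2 ProofF (num n) (num m)))
  /-- `negfn` sends the code of a sentence to the code of its negation. -/
  negfn_spec : ∀ s : Larith.Sentence, negfn (code s) = code (∼s)

/-- The formula `Dgn(x, y)` represents in `T` the computable map sending the Gödel
code of a sentence `s` to the Gödel code of the diagonal sentence `D(E_s(v))` of
its extension: `T ⊢ Dgn(⁰⌜D(E_s(v))⌝, ⁰⌜s⌝)` and
`T ⊢ ∀x (Dgn(x, ⁰⌜s⌝) → x = ⁰⌜D(E_s(v))⌝)`. -/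
def DgnRepresents (T : Larith.Theory) (G : GodelSetting T) : Prop :=
  (∀ s : Larith.Sentence,
    Proves T (app2 G.DgnF (num (G.code (G.diag (extFormula G.ProofF (G.code s)))))
      (num (G.code s)))) ∧
  (∀ s : Larith.Sentence,
    Proves T (all1 (app2 G.DgnF (Term.var (Sum.inr 0)) (num (G.code s)) ⟹
      Term.equal (Term.var (Sum.inr 0))
        (num (G.code (G.diag (extFormula G.ProofF (G.code s))))))))

open FirstOrder.Language.Structure

section Models
variable {M : Type} [Larith.Structure M]

/-- zero in a model -/
def zM : M := funMap (L := Larith) ArithFunc.zero ![]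
/-- successor in a model -/
def sM (a : M) : M := funMap (L := Larith) ArithFunc.succ ![a]
/-- addition in a model -/
def addM (a b : M) : M := funMap (L := Larith) ArithFunc.add ![a, b]
/-- ≤ in a model -/
def leM (a b : M) : Prop := RelMap (L := Larith) ArithRel.le ![a, b]
/-- value of numerals -/
def vN : ℕ → M
  | 0 => zM
  | n+1 => sM (vN n)

@[simp] lemma realize_num {α : Type} (v : α → M) (n : ℕ) :
    (num n : Larith.Term α).realize v = vN n := by
  induction n with
  | zero => simp [num, vN, Term.realize, zM]; congr; funext i; exact i.elim0
  | succ n ih =>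
    simp only [num, vN, Term.realize, sM]
    congr
    funext i
    fin_cases i
    simpa using ih

@[simp] lemma realize_succT {α : Type} (v : α → M) (t : Larith.Term α) :
    (succT t).realize v = sM (t.realize v) := by
  simp only [succT, Term.realize, sM]
  congr; funext i; fin_cases i; simp

@[simp] lemma realize_addT {α : Type} (v : α → M) (t u : Larith.Term α) :
    (addT t u).realize v = addM (t.realize v) (u.realize v) := by
  simp only [addT, Term.realize, addM]
  congr; funext i; fin_cases i <;> simp

@[simp] lemma realize_leF {α : Type} (v : α → M) (t u : Larith.Term α) :
    (leF t u).Realize v ↔ leM (t.realize v) (u.realize v) := by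
  simp only [leF, leM]; exact Formula.realize_rel₂

@[simp] lemma realize_ltF {α : Type} (v : α → M) (t u : Larith.Term α) :
    (ltF t u).Realize v ↔ leM (sM (t.realize v)) (u.realize v) := by
  simp [ltF]

lemma realize_closure {k : ℕ} (φ : Larith.Formula (Fin k)) :
    (M ⊨ closure φ) ↔ ∀ p : Fin k → M, φ.Realize p := by
  simp only [closure, Sentence.Realize, Formula.Realize, BoundedFormula.realize_iAlls]
  constructor <;> intro h p <;> [skip; skip] <;>
    · have := h p
      convert this using 1
      rw [← Formula.Realize, ← Formula.Realize, Formula.realize_relabel]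
      rfl

end Models
section Models2
open FirstOrder FirstOrder.Language
variable {M : Type} [Larith.Structure M]

lemma fin1_eta (i : Fin 1 → M) : i = fun _ => i 0 :=
  funext fun j => congrArg i (Subsingleton.elim _ _)

@[simp] lemma realize_all1 {α : Type} (v : α → M) (φ : Larith.Formula (α ⊕ Fin 1)) :
    (all1 φ).Realize v ↔ ∀ a : M, φ.Realize (Sum.elim v fun _ => a) := by
  rw [all1, Formula.realize_iAlls]
  constructor
  · intro h a; exact h (fun _ => a)
  · intro h i; rw [fin1_eta i]; exact h (i 0)

@[simp] lemma realize_ex1 {α : Type} (v : α → M) (φ : Larith.Formula (α ⊕ Fin 1)) :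
    (ex1 φ).Realize v ↔ ∃ a : M, φ.Realize (Sum.elim v fun _ => a) := by
  rw [ex1, Formula.realize_iExs]
  constructor
  · rintro ⟨i, h⟩; rw [fin1_eta i] at h; exact ⟨i 0, h⟩
  · rintro ⟨a, h⟩; exact ⟨fun _ => a, h⟩

@[simp] lemma realize_app1 {α : Type} (v : α → M) (φ : Larith.Formula (Fin 1))
    (t : Larith.Term α) :
    (app1 φ t).Realize v ↔ φ.Realize (fun _ : Fin 1 => t.realize v) := by
  simp only [app1, Formula.Realize, BoundedFormula.realize_subst]

@[simp] lemma realize_app2 {α : Type} (v : α → M) (φ : Larith.Formula (Fin 2))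
    (t u : Larith.Term α) :
    (app2 φ t u).Realize v ↔ φ.Realize ![t.realize v, u.realize v] := by
  simp only [app2, Formula.Realize, BoundedFormula.realize_subst]
  constructor <;> (intro h; convert h using 1; funext i; fin_cases i <;> simp)

@[simp] lemma realize_substLast {α : Type} (v : α → M) (φ : Larith.Formula (α ⊕ Fin 1))
    (t : Larith.Term α) :
    (substLast φ t).Realize v ↔ φ.Realize (Sum.elim v fun _ => t.realize v) := by
  simp only [substLast, Formula.Realize, BoundedFormula.realize_subst]
  constructor <;> (intro h; convert h using 1; funext i; cases i <;> simp)

@[simp] lemma realize_isMinOf {α : Type} (v : α → M) (φ : Larith.Formula (α ⊕ Fin 1))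
    (t : Larith.Term α) :
    (isMinOf φ t).Realize v ↔
      (φ.Realize (Sum.elim v fun _ => t.realize v) ∧
        ∀ a : M, leM (sM a) (t.realize v) → ¬ φ.Realize (Sum.elim v fun _ => a)) := by
  rw [isMinOf, Formula.realize_inf, realize_substLast, realize_all1]
  apply and_congr Iff.rfl
  apply forall_congr'
  intro a
  rw [Formula.realize_imp, Formula.realize_not, realize_ltF]
  simp [Term.realize_relabel]

end Models2
section Models3
open FirstOrder FirstOrder.Language
variable {M : Type} [Larith.Structure M]

@[simp] lemma realize_leF0 {α : Type} {v : α → M} {xs : Fin 0 → M} {t u : Larith.Term α} :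
    BoundedFormula.Realize (leF t u) v xs ↔ leM (t.realize v) (u.realize v) := by
  rw [show xs = default from Subsingleton.elim _ _]
  exact realize_leF v t u

@[simp] lemma realize_equal0 {α : Type} {v : α → M} {xs : Fin 0 → M} {t u : Larith.Term α} :
    BoundedFormula.Realize (Term.equal t u) v xs ↔ t.realize v = u.realize v := by
  rw [show xs = default from Subsingleton.elim _ _]
  exact Formula.realize_equal

end Models3
section PAModel
open FirstOrder FirstOrder.Language
variable {M : Type} [Larith.Structure M]

lemma succ_ne_zM (hM : M ⊨ PATheory) (a : M) : sM a ≠ zM := by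
  have h := hM.realize_of_mem (M := M)
    (closure (∼(Term.equal (succT (Term.var (0 : Fin 1))) (num 0))))
    (Set.mem_union_left _ (by simp [QTheory]))
  rw [realize_closure] at h
  have := h (fun _ => a)
  simpa [vN] using this

lemma succ_injM (hM : M ⊨ PATheory) {a b : M} (h : sM a = sM b) : a = b := by
  have h2 := hM.realize_of_mem (M := M)
    (closure (Term.equal (succT (Term.var (0 : Fin 2))) (succT (Term.var 1)) ⟹
      Term.equal (Term.var 0) (Term.var (1 : Fin 2))))
    (Set.mem_union_left _ (by simp [QTheory]))
  rw [realize_closure] at h2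
  have := h2 ![a, b]
  simp only [Formula.realize_imp, Formula.realize_equal, realize_succT, Term.realize_var] at this
  simpa using this (by simpa using h)

lemma zero_or_succM (hM : M ⊨ PATheory) (a : M) : a = zM ∨ ∃ b, a = sM b := by
  have h := hM.realize_of_mem (M := M)
    (closure (∼(Term.equal (Term.var (0 : Fin 1)) (num 0)) ⟹
      ex1 (Term.equal (Term.var (Sum.inl 0)) (succT (Term.var (Sum.inr (0 : Fin 1)))) :
        Larith.Formula (Fin 1 ⊕ Fin 1))))
    (Set.mem_union_left _ (by simp [QTheory]))
  rw [realize_closure] at h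
  have := h (fun _ => a)
  simp only [Formula.realize_imp, Formula.realize_not, Formula.realize_equal, realize_num,
    Term.realize_var, realize_ex1, realize_succT] at this
  by_cases ha : a = zM
  · exact Or.inl ha
  · right
    obtain ⟨b, hb⟩ := this (by simpa [vN] using ha)
    exact ⟨b, by simpa using hb⟩

lemma add_zeroM (hM : M ⊨ PATheory) (a : M) : addM a zM = a := by
  have h := hM.realize_of_mem (M := M)
    (closure (Term.equal (addT (Term.var (0 : Fin 1)) (num 0)) (Term.var 0)))
    (Set.mem_union_left _ (by simp [QTheory]))
  rw [realize_closure] at h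
  have := h (fun _ => a)
  simpa [vN] using this

lemma add_succM (hM : M ⊨ PATheory) (a b : M) : addM a (sM b) = sM (addM a b) := by
  have h := hM.realize_of_mem (M := M)
    (closure (Term.equal (addT (Term.var (0 : Fin 2)) (succT (Term.var 1)))
      (succT (addT (Term.var 0) (Term.var (1 : Fin 2))))))
    (Set.mem_union_left _ (by simp [QTheory]))
  rw [realize_closure] at h
  have := h ![a, b]
  simpa using this

lemma le_iffM (hM : M ⊨ PATheory) (a b : M) : leM a b ↔ ∃ c, addM c a = b := by
  have h := hM.realize_of_mem (M := M)
    (closure ((leF (Term.var (0 : Fin 2)) (Term.var 1)) ⇔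
      ex1 (Term.equal (addT (Term.var (Sum.inr (0 : Fin 1))) (Term.var (Sum.inl 0)))
        (Term.var (Sum.inl (1 : Fin 2))))))
    (Set.mem_union_left _ (by simp [QTheory]))
  rw [realize_closure] at h
  have := h ![a, b]
  simp only [Formula.realize_iff, realize_leF, Term.realize_var, realize_ex1,
    Formula.realize_equal, realize_addT] at this
  simpa using this

/-- Semantic induction in a model of PA. -/
lemma inductM (hM : M ⊨ PATheory) {k : ℕ} (φ : Larith.Formula (Fin k ⊕ Fin 1))
    (p : Fin k → M)
    (h0 : φ.Realize (Sum.elim p fun _ => (zM : M)))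
    (hs : ∀ a : M, φ.Realize (Sum.elim p fun _ => a) → φ.Realize (Sum.elim p fun _ => sM a)) :
    ∀ a : M, φ.Realize (Sum.elim p fun _ => a) := by
  have h := hM.realize_of_mem (M := M) (inductionSentence φ)
    (Set.mem_union_right _ ⟨k, φ, rfl⟩)
  rw [inductionSentence, realize_closure] at h
  have := h p
  rw [Formula.realize_imp, Formula.realize_inf, realize_substLast, realize_all1] at this
  intro a
  have key := this ⟨by simpa [vN] using h0, ?_⟩
  · rw [realize_all1] at key
    exact key a
  · intro b hb
    have hstep := hs b hb
    simp only [Formula.Realize, BoundedFormula.realize_subst] at hstep ⊢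
    convert hstep using 2
    rename_i i; cases i <;> simp

end PAModel
section PAModel2
open FirstOrder FirstOrder.Language
variable {M : Type} [Larith.Structure M]

lemma zero_addM (hM : M ⊨ PATheory) (a : M) : addM zM a = a := by
  have h := inductM hM
    (Term.equal (addT (num 0) (Term.var (Sum.inr 0))) (Term.var (Sum.inr 0)))
    (Fin.elim0) ?_ ?_
  · have := h a
    simpa [vN] using this
  · simp [vN, add_zeroM hM]
  · intro b hb
    simp only [Formula.realize_equal, realize_addT, realize_num, Term.realize_var,
      Sum.elim_inr, vN] at hb ⊢
    rw [add_succM hM, hb]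

lemma succ_addM (hM : M ⊨ PATheory) (c a : M) : addM (sM c) a = sM (addM c a) := by
  have h := inductM hM
    (Term.equal (addT (succT (Term.var (Sum.inl 0))) (Term.var (Sum.inr 0)))
      (succT (addT (Term.var (Sum.inl (0 : Fin 1))) (Term.var (Sum.inr 0)))))
    (fun _ => c) ?_ ?_
  · have := h a
    simpa using this
  · simp [add_zeroM hM]
  · intro b hb
    simp only [Formula.realize_equal, realize_addT, realize_succT, Term.realize_var,
      Sum.elim_inr, Sum.elim_inl] at hb ⊢
    rw [add_succM hM, add_succM hM, hb]

lemma add_assocM (hM : M ⊨ PATheory) (x y a : M) :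
    addM (addM x y) a = addM x (addM y a) := by
  have h := inductM hM
    (Term.equal (addT (addT (Term.var (Sum.inl 0)) (Term.var (Sum.inl 1))) (Term.var (Sum.inr 0)))
      (addT (Term.var (Sum.inl (0 : Fin 2))) (addT (Term.var (Sum.inl 1)) (Term.var (Sum.inr 0)))))
    ![x, y] ?_ ?_
  · have := h a
    simpa using this
  · simp [add_zeroM hM]
  · intro b hb
    simp only [Formula.realize_equal, realize_addT, Term.realize_var,
      Sum.elim_inr, Sum.elim_inl] at hb ⊢
    rw [add_succM hM, add_succM hM, add_succM hM, hb]

lemma le_reflM (hM : M ⊨ PATheory) (a : M) : leM a a :=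
  (le_iffM hM a a).2 ⟨zM, zero_addM hM a⟩

lemma le_succM (hM : M ⊨ PATheory) {a b : M} (h : leM a b) : leM a (sM b) := by
  obtain ⟨c, hc⟩ := (le_iffM hM a b).1 h
  exact (le_iffM hM _ _).2 ⟨sM c, by rw [succ_addM hM, hc]⟩

lemma succ_le_succM (hM : M ⊨ PATheory) {a b : M} (h : leM a b) : leM (sM a) (sM b) := by
  obtain ⟨c, hc⟩ := (le_iffM hM a b).1 h
  exact (le_iffM hM _ _).2 ⟨c, by rw [add_succM hM, hc]⟩

lemma le_of_succ_le_succM (hM : M ⊨ PATheory) {a b : M} (h : leM (sM a) (sM b)) : leM a b := by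
  obtain ⟨c, hc⟩ := (le_iffM hM _ _).1 h
  rw [add_succM hM] at hc
  exact (le_iffM hM _ _).2 ⟨c, succ_injM hM hc⟩

lemma le_transM (hM : M ⊨ PATheory) {a b c : M} (h1 : leM a b) (h2 : leM b c) : leM a c := by
  obtain ⟨u, hu⟩ := (le_iffM hM _ _).1 h1
  obtain ⟨w, hw⟩ := (le_iffM hM _ _).1 h2
  exact (le_iffM hM _ _).2 ⟨addM w u, by rw [add_assocM hM, hu, hw]⟩

lemma le_zeroM (hM : M ⊨ PATheory) {a : M} (h : leM a zM) : a = zM := by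
  obtain ⟨c, hc⟩ := (le_iffM hM _ _).1 h
  rcases zero_or_succM hM a with h0 | ⟨b, hb⟩
  · exact h0
  · rw [hb, add_succM hM] at hc
    exact absurd hc (succ_ne_zM hM _)

lemma zero_leM (hM : M ⊨ PATheory) (a : M) : leM zM a :=
  (le_iffM hM _ _).2 ⟨a, add_zeroM hM a⟩

lemma le_succ_decompM (hM : M ⊨ PATheory) {a x : M} (h : leM a (sM x)) :
    leM a x ∨ a = sM x := by
  obtain ⟨c, hc⟩ := (le_iffM hM _ _).1 h
  rcases zero_or_succM hM c with h0 | ⟨c', hc'⟩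
  · right; rw [h0, zero_addM hM] at hc; exact hc
  · left
    rw [hc', succ_addM hM] at hc
    exact (le_iffM hM _ _).2 ⟨c', succ_injM hM hc⟩

lemma linearM (hM : M ⊨ PATheory) (a b : M) : leM a b ∨ leM (sM b) a := by
  have h := inductM hM
    (all1 ((leF (Term.var (Sum.inl (Sum.inr (0 : Fin 1)))) (Term.var (Sum.inr 0))) ⊔
      (leF (succT (Term.var (Sum.inr 0))) (Term.var (Sum.inl (Sum.inr (0 : Fin 1)))))))
    (Fin.elim0) ?_ ?_
  · have := h a
    rw [realize_all1] at this
    have := this b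
    simpa using this
  · rw [realize_all1]
    intro c
    simp only [Formula.Realize, BoundedFormula.realize_sup, realize_leF, realize_leF0, Term.realize_var, Sum.elim_inl, Sum.elim_inr]
    exact Or.inl (zero_leM hM c)
  · intro x hx
    rw [realize_all1] at hx ⊢
    intro c
    have hxc := hx c
    simp only [Formula.Realize, BoundedFormula.realize_sup, realize_leF, realize_leF0, realize_succT, Term.realize_var,
      Sum.elim_inl, Sum.elim_inr] at hxc ⊢
    rcases hxc with h1 | h1
    · obtain ⟨u, hu⟩ := (le_iffM hM _ _).1 h1
      rcases zero_or_succM hM u with h0 | ⟨u', hu'⟩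
      · right
        rw [h0, zero_addM hM] at hu
        rw [hu]
        exact le_reflM hM _
      · left
        rw [hu', succ_addM hM] at hu
        exact (le_iffM hM _ _).2 ⟨u', by rw [add_succM hM, hu]⟩
    · exact Or.inr (le_succM hM h1)

lemma le_of_not_ltM (hM : M ⊨ PATheory) {a b : M} (h : ¬ leM (sM b) a) : leM a b :=
  (linearM hM a b).resolve_right h

lemma bounded_by_numM (hM : M ⊨ PATheory) (m : ℕ) :
    ∀ a : M, leM a (vN m) → ∃ i, i ≤ m ∧ a = vN i := by
  induction m with
  | zero => intro a h; exact ⟨0, le_refl 0, le_zeroM hM h⟩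
  | succ m ih =>
    intro a h
    rcases le_succ_decompM hM h with h1 | h1
    · obtain ⟨i, hi, hia⟩ := ih a h1
      exact ⟨i, Nat.le_succ_of_le hi, hia⟩
    · exact ⟨m + 1, le_refl _, h1⟩

/-- Least number principle for a definable predicate. -/
lemma lnpM (hM : M ⊨ PATheory) (ψ : Larith.Formula (Fin 1)) (a : M)
    (ha : ψ.Realize (fun _ : Fin 1 => a)) :
    ∃ z : M, ψ.Realize (fun _ : Fin 1 => z) ∧
      ∀ b : M, leM (sM b) z → ¬ ψ.Realize (fun _ : Fin 1 => b) := by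
  by_contra hno
  push_neg at hno
  -- no minimal witness: every witness has a smaller witness
  have hsmall : ∀ x : M, ψ.Realize (fun _ : Fin 1 => x) →
      ∃ b : M, leM (sM b) x ∧ ψ.Realize (fun _ : Fin 1 => b) := by
    intro x hx
    obtain ⟨b, hb1, hb2⟩ := hno x hx
    exact ⟨b, hb1, hb2⟩
  -- P(n) := ∀ m ≤ n, ¬ψ(m), by induction
  have h := inductM hM
    (all1 ((leF (Term.var (Sum.inr 0)) (Term.var (Sum.inl (Sum.inr (0 : Fin 1))))) ⟹
      ∼(ψ.relabel (fun _ => (Sum.inr 0 : (Fin 0 ⊕ Fin 1) ⊕ Fin 1)))))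
    (Fin.elim0) ?_ ?_
  · have hP := h a
    rw [realize_all1] at hP
    have := hP a
    simp only [Formula.realize_imp, Formula.realize_not, Formula.realize_relabel,
      realize_leF, Term.realize_var, Sum.elim_inr, Sum.elim_inl] at this
    exact this (le_reflM hM a) (by convert ha using 1; funext x; simp)
  · rw [realize_all1]
    intro c
    simp only [Formula.realize_imp, Formula.realize_not, Formula.realize_relabel,
      realize_leF, Term.realize_var, Sum.elim_inr, Sum.elim_inl]
    intro hc hψ
    have hc0 : c = zM := le_zeroM hM hc
    obtain ⟨b, hb1, _⟩ := hsmall c (by convert hψ using 1; funext x; simp)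
    rw [hc0] at hb1
    exact succ_ne_zM hM b (le_zeroM hM hb1)
  · intro x hx
    rw [realize_all1] at hx ⊢
    intro c
    simp only [Formula.realize_imp, Formula.realize_not, Formula.realize_relabel,
      realize_leF, Term.realize_var, Sum.elim_inr, Sum.elim_inl] at hx ⊢
    intro hc hψ
    rcases le_succ_decompM hM hc with h1 | h1
    · exact hx c h1 hψ
    · obtain ⟨b, hb1, hb2⟩ := hsmall c (by convert hψ using 1; funext x; simp)
      rw [h1] at hb1
      exact hx b (le_of_succ_le_succM hM hb1) (by convert hb2 using 1; funext x; simp)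

end PAModel2
section Main
open FirstOrder FirstOrder.Language

lemma proves_false_of_proves_both {T : Larith.Theory} {φ : Larith.Sentence}
    (h1 : Proves T φ) (h2 : Proves T (∼φ)) : ¬ Consistent T := by
  intro hcon
  apply hcon
  rw [Proves, Theory.models_sentence_iff]
  intro M
  have r1 := Theory.models_sentence_iff.1 h1 M
  have r2 := Theory.models_sentence_iff.1 h2 M
  rw [Sentence.realize_not] at r2
  exact absurd r1 r2

theorem statement_4' (T : Larith.Theory) (hPA : PATheory ⊆ T) (hcon : Consistent T)
    (hcomp : Complete T) (G : GodelSetting T) (hdgn : DgnRepresents T G)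
    (s : Larith.Sentence)
    (hrefute : Proves T (∼s))
    (hproof : Proves T (ex1 (app2 G.ProofF (Term.var (Sum.inr 0)) (num (G.code s))))) :
    Proves T (remoteAt G.ProofF G.DgnF (num (G.code s))) := by
  classical
  set d : Larith.Sentence := G.diag (extFormula G.ProofF (G.code s)) with hd
  -- no standard number proves s
  have hnostd : ∀ n : ℕ, Proves T (∼(app2 G.ProofF (num n) (num (G.code s)))) := by
    intro n
    rcases G.proof_decide n (G.code s) with h | h
    · exact absurd hcon (proves_false_of_proves_both (G.proof_sound s n h) hrefute)
    · exact h
  rw [Proves, Theory.models_sentence_iff]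
  intro M
  haveI : Nonempty M := M.nonempty'
  have hMT : (M : Type _) ⊨ T := M.is_model
  have hM : (M : Type _) ⊨ PATheory := ⟨fun φ hφ => hMT.realize_of_mem φ (hPA hφ)⟩
  -- predicates
  set Ps : M → Prop := fun a => G.ProofF.Realize ![a, vN (G.code s)] with hPs
  set Pd : M → Prop := fun a => G.ProofF.Realize ![a, vN (G.code d)] with hPd
  have hreal : ∀ φ : Larith.Sentence, Proves T φ → (M : Type _) ⊨ φ := fun φ h =>
    Theory.models_sentence_iff.1 h M
  -- ∃ internal proof of s
  have hex : ∃ a : M, Ps a := by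
    have := hreal _ hproof
    rw [Sentence.Realize, realize_ex1] at this
    obtain ⟨a, ha⟩ := this
    rw [realize_app2] at ha
    refine ⟨a, ?_⟩
    rw [hPs]
    simpa using ha
  -- no standard element satisfies Ps
  have hnostdM : ∀ n : ℕ, ¬ Ps (vN n) := by
    intro n hn
    have := hreal _ (hnostd n)
    rw [Sentence.realize_not, Sentence.Realize, realize_app2] at this
    simp only [realize_num] at this
    rw [hPs] at hn
    exact this hn
  -- the ψ-formulas for LNP
  set ψs : Larith.Formula (Fin 1) := app2 G.ProofF (Term.var 0) (num (G.code s)) with hψs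
  set ψd : Larith.Formula (Fin 1) := app2 G.ProofF (Term.var 0) (num (G.code d)) with hψd
  have hψsR : ∀ a : M, (ψs.Realize (fun _ : Fin 1 => a) ↔ Ps a) := by
    intro a
    rw [hψs, realize_app2, hPs]
    simp
  have hψdR : ∀ a : M, (ψd.Realize (fun _ : Fin 1 => a) ↔ Pd a) := by
    intro a
    rw [hψd, realize_app2, hPd]
    simp
  -- least proof k of s
  obtain ⟨a0, ha0⟩ := hex
  obtain ⟨k, hk1, hk2⟩ := lnpM hM ψs a0 ((hψsR a0).2 ha0)
  rw [hψsR] at hk1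
  have hk2' : ∀ b : M, leM (sM b) k → ¬ Ps b := fun b hb h => (hk2 b hb) ((hψsR b).2 h)
  -- k is above all standard elements
  have hknonstd : ∀ n : ℕ, leM (sM (vN n)) k := by
    intro n
    rcases linearM hM k (vN n) with h | h
    · obtain ⟨i, _, hi⟩ := bounded_by_numM hM n k h
      exact absurd (hi ▸ hk1) (hnostdM i)
    · exact h
  -- key claim: there is a (least) internal proof z of d with z < k
  have hkey : ∃ z : M, (Pd z ∧ ∀ b : M, leM (sM b) z → ¬ Pd b) ∧
      ∃ kk : M, (Ps kk ∧ ∀ b : M, leM (sM b) kk → ¬ Ps b) ∧ leM (sM z) kk := by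
    rcases hcomp d with hTd | hTnd
    · -- T proves d : standard proof n₀, so least proof of d is standard, below k
      obtain ⟨n₀, hn₀⟩ := G.proof_complete d hTd
      have hPdn₀ : Pd (vN n₀) := by
        have := hreal _ hn₀
        rw [Sentence.Realize, realize_app2] at this
        rw [hPd]
        simpa using this
      obtain ⟨z, hz1, hz2⟩ := lnpM hM ψd (vN n₀) ((hψdR _).2 hPdn₀)
      rw [hψdR] at hz1
      have hz2' : ∀ b : M, leM (sM b) z → ¬ Pd b := fun b hb h => (hz2 b hb) ((hψdR b).2 h)
      have hzle : leM z (vN n₀) := by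
        rcases linearM hM z (vN n₀) with h | h
        · exact h
        · exact absurd hPdn₀ (hz2' _ h)
      refine ⟨z, ⟨hz1, hz2'⟩, k, ⟨hk1, hk2'⟩, ?_⟩
      exact le_transM hM (succ_le_succM hM hzle) (hknonstd n₀)
    · -- T proves ¬d : then ¬E_s(⌜d⌝) holds in M
      have hiff := hreal _ (G.diag_spec (extFormula G.ProofF (G.code s)))
      rw [Sentence.Realize, Formula.realize_iff] at hiff
      have hnd := hreal _ hTnd
      rw [Sentence.realize_not] at hnd
      have hnotext : ¬ (app1 (extFormula G.ProofF (G.code s))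
          (num (G.code d))).Realize (default : Empty → M) := by
        intro h
        exact hnd (hiff.2 h)
      rw [realize_app1] at hnotext
      rw [extFormula, extFormulaAt, Formula.realize_iAlls] at hnotext
      push_neg at hnotext
      obtain ⟨i, hi⟩ := hnotext
      rw [Formula.realize_imp] at hi
      push_neg at hi
      obtain ⟨hconj, hle⟩ := hi
      rw [Formula.realize_inf, realize_app2] at hconj
      rw [realize_leF] at hle
      obtain ⟨hx, hy⟩ := hconj
      -- hx : Pd (i 0), hy : i 1 is the least proof of s, hle : ¬ i 1 ≤ i 0
      have hx' : Pd (i 0) := by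
        rw [hPd]
        simpa [Term.realize_relabel] using hx
      rw [minProofOf, realize_isMinOf] at hy
      obtain ⟨hy1, hy2⟩ := hy
      have hy1' : Ps (i 1) := by
        rw [hPs]
        rw [realize_app2] at hy1
        simpa [Term.realize_relabel] using hy1
      have hy2' : ∀ b : M, leM (sM b) (i 1) → ¬ Ps b := by
        intro b hb hpb
        refine hy2 b ?_ ?_
        · simpa using hb
        · rw [realize_app2]
          rw [hPs] at hpb
          simpa [Term.realize_relabel] using hpb
      -- least proof z of d
      obtain ⟨z, hz1, hz2⟩ := lnpM hM ψd (i 0) ((hψdR _).2 hx')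
      rw [hψdR] at hz1
      have hz2' : ∀ b : M, leM (sM b) z → ¬ Pd b := fun b hb h => (hz2 b hb) ((hψdR b).2 h)
      have hzle : leM z (i 0) := by
        rcases linearM hM z (i 0) with h | h
        · exact h
        · exact absurd hx' (hz2' _ h)
      have hxlt : leM (sM (i 0)) (i 1) := by
        rcases linearM hM (i 1) (i 0) with h | h
        · simp only [Term.realize_var, Sum.elim_inr] at hle
          exact absurd h hle
        · exact h
      refine ⟨z, ⟨hz1, hz2'⟩, i 1, ⟨hy1', hy2'⟩, ?_⟩
      exact le_transM hM (succ_le_succM hM hzle) hxlt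
  -- now realize remote(⌜s⌝)
  obtain ⟨z, ⟨hz1, hz2⟩, kk, ⟨hkk1, hkk2⟩, hzk⟩ := hkey
  have hdgnM : G.DgnF.Realize (M := (M : Type)) ![vN (G.code d), vN (G.code s)] := by
    have := hreal _ (hdgn.1 s)
    rw [Sentence.Realize, realize_app2] at this
    simpa using this
  rw [Sentence.Realize, remoteAt, Formula.realize_iExs]
  refine ⟨![vN (G.code d), kk, z], ?_⟩
  rw [Formula.realize_inf, Formula.realize_inf, Formula.realize_inf]
  refine ⟨⟨⟨?_, ?_⟩, ?_⟩, ?_⟩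
  · rw [realize_app2]
    simpa [Term.realize_relabel] using hdgnM
  · rw [minProofOf, realize_isMinOf]
    constructor
    · rw [realize_app2]
      rw [hPs] at hkk1
      simpa [Term.realize_relabel] using hkk1
    · intro b hb hpb
      refine hkk2 b (by simpa using hb) ?_
      rw [realize_app2] at hpb
      rw [hPs]
      simpa [Term.realize_relabel] using hpb
  · rw [minProofOf, realize_isMinOf]
    constructor
    · rw [realize_app2]
      rw [hPd] at hz1
      simpa [Term.realize_relabel] using hz1
    · intro b hb hpb
      refine hz2 b (by simpa using hb) ?_
      rw [realize_app2] at hpb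
      rw [hPd]
      simpa [Term.realize_relabel] using hpb
  · rw [realize_ltF]
    simpa using hzk

end Main
/-- **Lemma II.** For any standard sentence `s` in the language of
`T`: if `T ⊢ ¬s` and `T ⊢ ∃n Proof_T(n, ⁰⌜s⌝)`, then `T ⊢ remote(⁰⌜s⌝)`. -/
theorem statement_4 (T : Larith.Theory) (hPA : PATheory ⊆ T) (hcon : Consistent T)
    (hcomp : Complete T) (G : GodelSetting T) (hdgn : DgnRepresents T G)
    (s : Larith.Sentence)
    (hrefute : Proves T (∼s))
    (hproof : Proves T (ex1 (app2 G.ProofF (Term.var (Sum.inr 0)) (num (G.code s))))) :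
    Proves T (remoteAt G.ProofF G.DgnF (num (G.code s))) := by
  exact statement_4' T hPA hcon hcomp G hdgn s hrefute hproof

end GodelStalk
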